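/- arXiv:0807.1775 — 2 statements merged into one kernel-verified Lean document; each statement's English description precedes it below -/
import Mathlib

section
/- Simulated key correctness: let X = g^c, Z = g^{-ID*} · X^α, W ∈ G, and for ID ≠ ID* set d1' = (g^ID · Z)^{r'} · W^{-α/(ID−ID*)} and d2' = X^{r'} · W^{-1/(ID−ID*)}. Then with r̃' = r' − w/(c(ID−ID*)) where w = log_g W, we have d1' = W^{1/c} · (g^ID · Z)^{r̃'} and d2' = X^{r̃'}. -/
theorem statement3
    {p : ℕ} [Fact (Nat.Prime p)]
    {G : Type*} [CommGroup G]
    (pw : G → ZMod p → G)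
    (hpw_add : ∀ (a : G) (s t : ZMod p), pw a (s + t) = pw a s * pw a t)
    (hpw_mul : ∀ (a : G) (s t : ZMod p), pw (pw a s) t = pw a (s * t))
    (hpw_one : ∀ a : G, pw a 1 = a)
    (hpw_base : ∀ (a b : G) (s : ZMod p), pw (a * b) s = pw a s * pw b s)
    (g : G)
    (c α r' w ID IDstar : ZMod p) (hc : c ≠ 0) (hID : ID ≠ IDstar)
    (X Z W d1' d2' : G)
    (hX : X = pw g c) (hZ : Z = pw g (-IDstar) * pw X α) (hW : W = pw g w)
    (hd1' : d1' = pw (pw g ID * Z) r' * pw W (-(α * (ID - IDstar)⁻¹)))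
    (hd2' : d2' = pw X r' * pw W (-(ID - IDstar)⁻¹))
    (rt : ZMod p) (hrt : rt = r' - w * (c * (ID - IDstar))⁻¹) :
    d1' = pw W c⁻¹ * pw (pw g ID * Z) rt ∧ d2' = pw X rt := by
  have hd : ID - IDstar ≠ 0 := sub_ne_zero.mpr hID
  subst hd1' hd2' hrt hX hZ hW
  constructor <;>
  · simp only [hpw_base, hpw_mul, ← hpw_add]
    congr 1
    field_simp
    ring
end

section
/- Boneh-Hamburg key aggregation: let h_i = g^{a_i} for i = 0..n and T_i = h_{i+1}^r · h_i^{−ID·r} for i = 0..n−1, and let ρ = M_1·y where M_1 is the bidiagonal matrix for (X−ID) and y ∈ Z_p^n. Then z^r · Π_{i=0}^{n−1} T_i^{y_i} = (z · Π_{k=0}^{n} h_k^{ρ_k})^r. -/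
theorem statement13
    {p : ℕ} [Fact (Nat.Prime p)]
    {G : Type*} [CommGroup G]
    (pw : G → ZMod p → G)
    (hpw_add : ∀ (a : G) (s t : ZMod p), pw a (s + t) = pw a s * pw a t)
    (hpw_mul : ∀ (a : G) (s t : ZMod p), pw (pw a s) t = pw a (s * t))
    (hpw_one : ∀ a : G, pw a 1 = a)
    (hpw_base : ∀ (a b : G) (s : ZMod p), pw (a * b) s = pw a s * pw b s)
    (g : G)
    (z : G) (n : ℕ) (hn : 1 ≤ n)
    (a : ℕ → ZMod p) (r ID : ZMod p) (y ρ : ℕ → ZMod p)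
    (hG : ℕ → G) (T : ℕ → G)
    (hhG : ∀ i, hG i = pw g (a i))
    (hT : ∀ i, T i = pw (hG (i + 1)) r * pw (hG i) (-(ID * r)))
    (hρ0 : ρ 0 = -ID * y 0)
    (hρi : ∀ i : ℕ, 1 ≤ i → i ≤ n - 1 → ρ i = y (i - 1) - ID * y i)
    (hρn : ρ n = y (n - 1)) :
    pw z r * ∏ i ∈ Finset.range n, pw (T i) (y i) =
      pw (z * ∏ k ∈ Finset.range (n + 1), pw (hG k) (ρ k)) r := by
  have hpw_zero : pw g 0 = 1 := by
    have h := hpw_add g 0 0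
    simp only [add_zero] at h
    exact left_eq_mul.mp h
  have hprod : ∀ (m : ℕ) (f : ℕ → ZMod p),
      ∏ i ∈ Finset.range m, pw g (f i) = pw g (∑ i ∈ Finset.range m, f i) := by
    intro m f
    induction m with
    | zero => simp [hpw_zero]
    | succ m ih => rw [Finset.prod_range_succ, Finset.sum_range_succ, hpw_add, ih]
  -- rewrite LHS
  have hL : ∀ i, pw (T i) (y i) = pw g ((a (i+1) * r + a i * -(ID * r)) * y i) := by
    intro i
    rw [hT, hhG, hhG, hpw_mul, hpw_mul, ← hpw_add, hpw_mul]
  have hR : ∀ k, pw (hG k) (ρ k) = pw g (a k * ρ k) := by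
    intro k; rw [hhG, hpw_mul]
  calc pw z r * ∏ i ∈ Finset.range n, pw (T i) (y i)
      = pw z r * pw g (∑ i ∈ Finset.range n, (a (i+1) * r + a i * -(ID * r)) * y i) := by
        rw [← hprod]; congr 1; exact Finset.prod_congr rfl fun i _ => hL i
    _ = pw z r * pw g ((∑ k ∈ Finset.range (n+1), a k * ρ k) * r) := by
        congr 2
        have hρ : ∀ k ∈ Finset.range (n+1), a k * ρ k
            = a k * ((if k = 0 then 0 else y (k-1)) - ID * (if k = n then 0 else y k)) := by
          intro k hk
          rw [Finset.mem_range] at hk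
          by_cases h0 : k = 0
          · subst h0
            have : (0:ℕ) ≠ n := fun h => by omega
            simp [hρ0, this]
          · by_cases hkn : k = n
            · subst hkn
              simp [hρn, h0]
            · have h1 : 1 ≤ k := Nat.one_le_iff_ne_zero.mpr h0
              have h2 : k ≤ n - 1 := by omega
              simp [hρi k h1 h2, h0, hkn]
        have hS1 : ∑ k ∈ Finset.range (n+1), a k * (if k = 0 then 0 else y (k-1))
            = ∑ i ∈ Finset.range n, a (i+1) * y i := by
          rw [Finset.sum_range_succ']
          simp
        have hS2 : ∑ k ∈ Finset.range (n+1), a k * (ID * (if k = n then 0 else y k))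
            = ∑ i ∈ Finset.range n, a i * (ID * y i) := by
          rw [Finset.sum_range_succ, if_pos rfl, mul_zero, mul_zero, add_zero]
          exact Finset.sum_congr rfl fun i hi => by
            rw [if_neg (Nat.ne_of_lt (Finset.mem_range.mp hi))]
        have key : ∑ k ∈ Finset.range (n+1), a k * ρ k
            = ∑ i ∈ Finset.range n, (a (i+1) * y i - a i * (ID * y i)) := by
          rw [Finset.sum_congr rfl hρ, Finset.sum_sub_distrib]
          rw [← hS1, ← hS2, ← Finset.sum_sub_distrib]
          exact Finset.sum_congr rfl fun k _ => by ring
        rw [key, Finset.sum_mul]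
        exact Finset.sum_congr rfl fun i _ => by ring
    _ = pw (z * ∏ k ∈ Finset.range (n + 1), pw (hG k) (ρ k)) r := by
        rw [hpw_base, Finset.prod_congr rfl fun k _ => hR k, hprod, hpw_mul]
end
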